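/- Fix x_u, x_v ∈ [0,1] with x = d_L(x_u, x_v), let 0 ≤ r_d ≤ r_s with r_s > 2r_d, x ≤ r_d and 2r_s ≤ 1, and let Z_1, …, Z_{m₁} and W_1, …, W_{m₂} be i.i.d. uniform on [0,1]. Then the count #{i ≤ m₁ : d_L(Z_i, x_u) > r_s and d_L(Z_i, x_v) > r_d} + #{j ≤ m₂ : d_L(W_j, x_u) > r_d and d_L(W_j, x_v) > r_s} has the binomial distribution Bin(m₁ + m₂, 1 − 2r_s). -/

import Mathlib

open MeasureTheory

/-- The circular distance on `[0,1]`. -/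
noncomputable def dL (x y : ℝ) : ℝ := min |x - y| (1 - |x - y|)

/-- The uniform (probability) measure on `[0,1]`. -/
noncomputable def unif : Measure ℝ := volume.restrict (Set.Icc (0 : ℝ) 1)

/-- The binomial probability `Bin(m,p)` of the value `k`. -/
noncomputable def binomPMF (m : ℕ) (p : ℝ) (k : ℕ) : ENNReal :=
  ENNReal.ofReal ((m.choose k : ℝ) * p ^ k * (1 - p) ^ (m - k))

lemma abs_sum_le_two {x y z : ℝ} (hx : x ∈ Set.Icc (0:ℝ) 1) (hy : y ∈ Set.Icc (0:ℝ) 1)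
    (hz : z ∈ Set.Icc (0:ℝ) 1) : |x - y| + |y - z| + |x - z| ≤ 2 := by
  obtain ⟨hx0, hx1⟩ := hx; obtain ⟨hy0, hy1⟩ := hy; obtain ⟨hz0, hz1⟩ := hz
  rcases le_total x y with h1 | h1 <;> rcases le_total y z with h2 | h2 <;>
    rcases le_total x z with h3 | h3 <;>
    rcases abs_cases (x - y) with ⟨e1, _⟩ | ⟨e1, _⟩ <;>
    rcases abs_cases (y - z) with ⟨e2, _⟩ | ⟨e2, _⟩ <;>
    rcases abs_cases (x - z) with ⟨e3, _⟩ | ⟨e3, _⟩ <;>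
    rw [e1, e2, e3] <;> linarith

lemma dL_triangle {x y z : ℝ} (hx : x ∈ Set.Icc (0:ℝ) 1) (hy : y ∈ Set.Icc (0:ℝ) 1)
    (hz : z ∈ Set.Icc (0:ℝ) 1) : dL x z ≤ dL x y + dL y z := by
  have h1 : |x - z| ≤ |x - y| + |y - z| := abs_sub_le x y z
  have h2 : |y - z| ≤ |y - x| + |x - z| := abs_sub_le y x z
  have h3 : |x - y| ≤ |x - z| + |z - y| := abs_sub_le x z y
  have h4 := abs_sum_le_two hx hy hz
  rw [abs_sub_comm y x] at h2
  rw [abs_sub_comm z y] at h3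
  unfold dL
  rcases min_cases |x - y| (1 - |x - y|) with ⟨e1, f1⟩ | ⟨e1, f1⟩ <;>
    rcases min_cases |y - z| (1 - |y - z|) with ⟨e2, f2⟩ | ⟨e2, f2⟩ <;>
    rw [e1, e2]
  · exact (min_le_left _ _).trans h1
  · exact (min_le_right _ _).trans (by linarith)
  · exact (min_le_right _ _).trans (by linarith)
  · exact (min_le_left _ _).trans (by linarith)

lemma dL_comm (x y : ℝ) : dL x y = dL y x := by unfold dL; rw [abs_sub_comm]

lemma dL_ball_eq (a rs : ℝ) :
    {z : ℝ | rs < dL z a} = Set.Ioo (a + rs) (a + 1 - rs) ∪ Set.Ioo (a - 1 + rs) (a - rs) := by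
  ext z
  simp only [Set.mem_setOf_eq, dL, Set.mem_union, Set.mem_Ioo]
  constructor
  · intro h
    have h1 := lt_of_lt_of_le h (min_le_left _ _)
    have h2 := lt_of_lt_of_le h (min_le_right _ _)
    rcases abs_cases (z - a) with ⟨e, sgn⟩ | ⟨e, sgn⟩ <;> rw [e] at h1 h2
    · exact Or.inl ⟨by linarith, by linarith⟩
    · exact Or.inr ⟨by linarith, by linarith⟩
  · intro h
    rw [lt_min_iff]
    rcases h with ⟨h1, h2⟩ | ⟨h1, h2⟩ <;>
      rcases abs_cases (z - a) with ⟨e, sgn⟩ | ⟨e, sgn⟩ <;> rw [e] <;>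
      exact ⟨by linarith, by linarith⟩

lemma vol_Ioo_inter_Icc (p q c d : ℝ) :
    volume (Set.Ioo p q ∩ Set.Icc c d) = ENNReal.ofReal (min q d - max p c) := by
  apply le_antisymm
  · calc volume (Set.Ioo p q ∩ Set.Icc c d) ≤ volume (Set.Icc (max p c) (min q d)) := by
          apply measure_mono
          rintro z ⟨⟨h1, h2⟩, h3, h4⟩
          exact ⟨max_le h1.le h3, le_min h2.le h4⟩
    _ = ENNReal.ofReal (min q d - max p c) := Real.volume_Icc
  · calc ENNReal.ofReal (min q d - max p c) = volume (Set.Ioo (max p c) (min q d)) :=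
          Real.volume_Ioo.symm
    _ ≤ volume (Set.Ioo p q ∩ Set.Icc c d) := by
          apply measure_mono
          rintro z ⟨h1, h2⟩
          rw [max_lt_iff] at h1; rw [lt_min_iff] at h2
          exact ⟨⟨h1.1, h2.1⟩, h1.2.le, h2.2.le⟩

lemma dL_measurable (a : ℝ) : Measurable fun z : ℝ => dL z a := by
  unfold dL; fun_prop

lemma vol_ball_compl (a rs : ℝ) (ha : a ∈ Set.Icc (0:ℝ) 1) (hrs : 0 ≤ rs) (h1 : 2 * rs ≤ 1) :
    volume ({z : ℝ | rs < dL z a} ∩ Set.Icc 0 1) = ENNReal.ofReal (1 - 2 * rs) := by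
  obtain ⟨ha0, ha1⟩ := ha
  rw [dL_ball_eq, Set.union_inter_distrib_right]
  rw [measure_union]
  · rw [vol_Ioo_inter_Icc, vol_Ioo_inter_Icc]
    have e1 : max (a + rs) 0 = a + rs := max_eq_left (by linarith)
    have e2 : min (a - rs) 1 = a - rs := min_eq_left (by linarith)
    rw [e1, e2]
    rcases le_or_gt a rs with hc | hc
    · have e3 : min (a + 1 - rs) 1 = a + 1 - rs := min_eq_left (by linarith)
      have e4 : max (a - 1 + rs) 0 = 0 := max_eq_right (by linarith)
      rw [e3, e4]
      have : ENNReal.ofReal (a - rs - 0) = 0 := by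
        rw [ENNReal.ofReal_eq_zero]; linarith
      rw [this, add_zero]
      congr 1; ring
    · rcases le_or_gt a (1 - rs) with hd | hd
      · have e3 : min (a + 1 - rs) 1 = 1 := min_eq_right (by linarith)
        have e4 : max (a - 1 + rs) 0 = 0 := max_eq_right (by linarith)
        rw [e3, e4, ← ENNReal.ofReal_add (by linarith) (by linarith)]
        congr 1; ring
      · have e3 : min (a + 1 - rs) 1 = 1 := min_eq_right (by linarith)
        have e4 : max (a - 1 + rs) 0 = a - 1 + rs := max_eq_left (by linarith)
        rw [e3, e4]
        have : ENNReal.ofReal (1 - (a + rs)) = 0 := by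
          rw [ENNReal.ofReal_eq_zero]; linarith
        rw [this, zero_add]
        congr 1; ring
  · apply Set.disjoint_left.mpr
    rintro z ⟨⟨h1', h2'⟩, -⟩ ⟨⟨h3', h4'⟩, -⟩
    linarith
  · exact (measurableSet_Ioo.inter measurableSet_Icc)

lemma key_measure (a b rs rd : ℝ) (ha : a ∈ Set.Icc (0:ℝ) 1) (hb : b ∈ Set.Icc (0:ℝ) 1)
    (hrd : 0 ≤ rd) (hrs2 : 2 * rd < rs) (hab : dL a b ≤ rd) (h1 : 2 * rs ≤ 1) :
    unif {z | rs < dL z a ∧ rd < dL z b} = ENNReal.ofReal (1 - 2 * rs) := by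
  have hmeas : MeasurableSet {z : ℝ | rs < dL z a ∧ rd < dL z b} := by
    exact (measurableSet_lt measurable_const (dL_measurable a)).inter
      (measurableSet_lt measurable_const (dL_measurable b))
  rw [unif, Measure.restrict_apply hmeas]
  have hset : {z : ℝ | rs < dL z a ∧ rd < dL z b} ∩ Set.Icc 0 1
      = {z : ℝ | rs < dL z a} ∩ Set.Icc 0 1 := by
    ext z
    simp only [Set.mem_inter_iff, Set.mem_setOf_eq, and_congr_left_iff]
    intro hz
    constructor
    · exact fun h => h.1
    · intro h
      refine ⟨h, ?_⟩
      have htri : dL z a ≤ dL z b + dL b a := dL_triangle hz hb ha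
      rw [dL_comm b a] at htri
      linarith
  rw [hset]
  exact vol_ball_compl a rs ha (by linarith) h1

open Finset in
open scoped Classical in
lemma count_set_rep {ι : Type*} [Fintype ι] (S : ι → Set ℝ) (k : ℕ) :
    {ω : ι → ℝ | (univ.filter fun i => ω i ∈ S i).card = k}
      = ⋃ T ∈ powersetCard k (univ : Finset ι),
          Set.pi Set.univ fun i => if i ∈ T then S i else (S i)ᶜ := by
  ext ω
  simp only [Set.mem_setOf_eq, Set.mem_iUnion, mem_powersetCard, Set.mem_pi, Set.mem_univ,
    forall_true_left, exists_prop]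
  constructor
  · intro h
    refine ⟨univ.filter fun i => ω i ∈ S i, ⟨subset_univ _, h⟩, fun i => ?_⟩
    by_cases hi : ω i ∈ S i <;> simp [hi]
  · rintro ⟨T, ⟨-, hcard⟩, hT⟩
    have : (univ.filter fun i => ω i ∈ S i) = T := by
      ext i
      have := hT i
      by_cases hi : i ∈ T <;> simp_all
    rw [this]; exact hcard

open Finset in
open scoped Classical in
lemma count_set_measurable {ι : Type*} [Fintype ι] (S : ι → Set ℝ)
    (hS : ∀ i, MeasurableSet (S i)) (k : ℕ) :
    MeasurableSet {ω : ι → ℝ | (univ.filter fun i => ω i ∈ S i).card = k} := by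
  rw [count_set_rep]
  refine MeasurableSet.biUnion (countable_toSet _) fun T _ => ?_
  refine MeasurableSet.pi (Set.to_countable _) fun i _ => ?_
  by_cases hi : i ∈ T <;> simp only [hi, if_true, if_false]
  · exact hS i
  · exact (hS i).compl

open Finset in
open scoped Classical in
lemma pi_count_eq_binom {ι : Type*} [Fintype ι] (μ : ι → Measure ℝ)
    [∀ i, IsProbabilityMeasure (μ i)] (S : ι → Set ℝ) (hS : ∀ i, MeasurableSet (S i))
    (p : ℝ) (hp0 : 0 ≤ p) (hp1 : p ≤ 1) (hμ : ∀ i, μ i (S i) = ENNReal.ofReal p) (k : ℕ) :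
    Measure.pi μ {ω | (univ.filter fun i => ω i ∈ S i).card = k}
      = binomPMF (Fintype.card ι) p k := by
  have hcompl : ∀ i, μ i ((S i)ᶜ) = ENNReal.ofReal (1 - p) := by
    intro i
    rw [measure_compl (hS i) (measure_ne_top _ _), hμ, measure_univ,
      ← ENNReal.ofReal_one, ← ENNReal.ofReal_sub _ hp0]
  rw [count_set_rep]
  rw [measure_biUnion_finset]
  · have hterm : ∀ T ∈ powersetCard k (univ : Finset ι),
        Measure.pi μ (Set.pi Set.univ fun i => if i ∈ T then S i else (S i)ᶜ)
          = ENNReal.ofReal p ^ k * ENNReal.ofReal (1 - p) ^ (Fintype.card ι - k) := by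
      intro T hT
      obtain ⟨-, hcard⟩ := mem_powersetCard.mp hT
      rw [Measure.pi_pi]
      have : ∀ i, μ i (if i ∈ T then S i else (S i)ᶜ)
          = if i ∈ T then ENNReal.ofReal p else ENNReal.ofReal (1 - p) := by
        intro i; by_cases hi : i ∈ T <;> simp [hi, hμ, hcompl]
      rw [Finset.prod_congr rfl fun i _ => this i, Finset.prod_ite, Finset.prod_const,
        Finset.prod_const]
      congr 1
      · congr 1
        rw [Finset.filter_univ_mem, hcard]
      · congr 1
        rw [Finset.filter_not, Finset.filter_univ_mem, ← Finset.compl_eq_univ_sdiff,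
          Finset.card_compl, hcard]
    rw [Finset.sum_congr rfl hterm, Finset.sum_const, Finset.card_powersetCard,
      Finset.card_univ, nsmul_eq_mul]
    rw [binomPMF, ENNReal.ofReal_mul (by positivity), ENNReal.ofReal_mul (by positivity),
      ENNReal.ofReal_pow hp0, ENNReal.ofReal_pow (by linarith), ENNReal.ofReal_natCast, mul_assoc]
  · intro T₁ h₁ T₂ h₂ hne
    rw [Function.onFun]
    apply Set.disjoint_left.mpr
    intro ω hω₁ hω₂
    apply hne
    ext i
    have k1 := hω₁ i (Set.mem_univ i)
    have k2 := hω₂ i (Set.mem_univ i)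
    by_cases ht1 : i ∈ T₁ <;> by_cases ht2 : i ∈ T₂ <;> simp_all
  · intro T _
    refine MeasurableSet.pi (Set.to_countable _) fun i _ => ?_
    by_cases hi : i ∈ T <;> simp only [hi, if_true, if_false]
    · exact hS i
    · exact (hS i).compl

lemma card_filter_sum {α β : Type*} [Fintype α] [Fintype β] (R : α ⊕ β → Prop) [DecidablePred R] :
    (Finset.univ.filter R).card
      = (Finset.univ.filter fun a => R (Sum.inl a)).card
        + (Finset.univ.filter fun b => R (Sum.inr b)).card := by
  rw [← Finset.card_toLeft_add_card_toRight]
  congr 1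
  · congr 1; ext x; simp
  · congr 1; ext x; simp

instance : IsProbabilityMeasure unif :=
  ⟨by rw [unif, Measure.restrict_apply_univ, Real.volume_Icc]; norm_num⟩

/-- Lemma 7 of the paper: for two different-cluster vertices at
circular distance `x ≤ r_d` with `r_s > 2r_d` and `2r_s ≤ 1`, the total Motif-4
count among the `m₁ + m₂` other points is `Bin(m₁ + m₂, 1 − 2r_s)`-distributed. -/
theorem gbm_motif4_count_diff (xu xv rs rd : ℝ) (m₁ m₂ : ℕ)
    (hxu : xu ∈ Set.Icc (0 : ℝ) 1) (hxv : xv ∈ Set.Icc (0 : ℝ) 1)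
    (hrd : 0 ≤ rd) (hrsd : rd ≤ rs) (hrs2 : 2 * rd < rs)
    (hx : dL xu xv ≤ rd) (hx1 : 2 * rs ≤ 1) :
    ∀ k : ℕ,
      ((Measure.pi fun _ : Fin m₁ => unif).prod (Measure.pi fun _ : Fin m₂ => unif))
        {ω | (Finset.univ.filter fun i : Fin m₁ =>
                rs < dL (ω.1 i) xu ∧ rd < dL (ω.1 i) xv).card
            + (Finset.univ.filter fun j : Fin m₂ =>
                rd < dL (ω.2 j) xu ∧ rs < dL (ω.2 j) xv).card = k}
        = binomPMF (m₁ + m₂) (1 - 2 * rs) k := by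
  classical
  intro k
  have hrs0 : 0 ≤ rs := le_trans (by linarith) hrs2.le
  set S : Fin m₁ ⊕ Fin m₂ → Set ℝ :=
    Sum.elim (fun _ => {z | rs < dL z xu ∧ rd < dL z xv})
             (fun _ => {z | rd < dL z xu ∧ rs < dL z xv}) with hSdef
  have hS : ∀ i, MeasurableSet (S i) := by
    rintro (i | j) <;>
      exact (measurableSet_lt measurable_const (dL_measurable _)).inter
        (measurableSet_lt measurable_const (dL_measurable _))
  have hp : ∀ i, unif (S i) = ENNReal.ofReal (1 - 2 * rs) := by
    rintro (i | j)
    · exact key_measure xu xv rs rd hxu hxv hrd hrs2 hx hx1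
    · have hswap : S (Sum.inr j) = {z | rs < dL z xv ∧ rd < dL z xu} := by
        ext z; exact and_comm
      rw [hswap]
      exact key_measure xv xu rs rd hxv hxu hrd hrs2 (by rwa [dL_comm]) hx1
  set e := MeasurableEquiv.sumPiEquivProdPi (fun _ : Fin m₁ ⊕ Fin m₂ => ℝ) with he
  set A : Set ((Fin m₁ → ℝ) × (Fin m₂ → ℝ)) :=
    {ω | (Finset.univ.filter fun i : Fin m₁ =>
            rs < dL (ω.1 i) xu ∧ rd < dL (ω.1 i) xv).card
        + (Finset.univ.filter fun j : Fin m₂ =>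
            rd < dL (ω.2 j) xu ∧ rs < dL (ω.2 j) xv).card = k} with hA
  have hpre : ⇑e ⁻¹' A
      = {f : Fin m₁ ⊕ Fin m₂ → ℝ | (Finset.univ.filter fun i => f i ∈ S i).card = k} := by
    ext f
    simp only [Set.mem_preimage, hA, Set.mem_setOf_eq, he,
      MeasurableEquiv.coe_sumPiEquivProdPi, Equiv.sumPiEquivProdPi, Equiv.coe_fn_mk]
    rw [card_filter_sum (fun s => f s ∈ S s)]
    simp [hSdef]
  have hBmeas := count_set_measurable S hS k
  have hAmeas : MeasurableSet A := e.measurableSet_preimage.mp (by rw [hpre]; exact hBmeas)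
  have hmp := measurePreserving_sumPiEquivProdPi
    (X := fun _ : Fin m₁ ⊕ Fin m₂ => ℝ) (fun _ => unif)
  rw [← hmp.map_eq, Measure.map_apply hmp.measurable hAmeas, ← he, hpre,
    pi_count_eq_binom (fun _ => unif) S hS (1 - 2 * rs) (by linarith) (by linarith) hp k]
  norm_num [Fintype.card_sum]
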